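/- Let n ≥ 1, let l ≥ 1 be an integer, and let I ⊆ {1, …, n} with #I = i. Then (Σ_{k=1}^n ε_I(k) x_k²)·(Δ^{l+1} δ) = 4(l+1)l·(Σ_{k=1}^n ε_I(k) ∂_k²)(Δ^{l−1} δ) + 2(l+1)(2i−n)·Δ^l δ as tempered distributions on ℝ^n. -/

import Mathlib

/-- Partial derivative ∂_p of a complex-valued function on ℝ^n. -/
noncomputable def pd {n : ℕ} (p : Fin n) (f : (Fin n → ℝ) → ℂ) : (Fin n → ℝ) → ℂ :=
  fun x => fderiv ℝ f x (Pi.single p 1)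

/-- The Laplacian Δ = ∂_1² + ⋯ + ∂_n² on complex-valued functions on ℝ^n. -/
noncomputable def lap {n : ℕ} (f : (Fin n → ℝ) → ℂ) : (Fin n → ℝ) → ℂ :=
  fun x => ∑ j, pd j (pd j f) x

/-- ε_I(k) = 1 if k ∈ I, −1 otherwise. -/
def epsSet {n : ℕ} (I : Finset (Fin n)) (k : Fin n) : ℝ := if k ∈ I then 1 else -1

/-- `(Σ_k ε_I(k) x_k²)·(Δ^{l+1} δ) = 4(l+1)l·(Σ_k ε_I(k) ∂_k²)(Δ^{l−1} δ)
      + 2(l+1)(2i−n)·Δ^l δ`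
as tempered distributions on ℝ^n, tested against an arbitrary Schwartz function `φ`.
Here `(Δ^k δ)(ψ) = (Δ^k ψ)(0)`, `(p·T)(φ) = T(p φ)` and `(∂_k² T)(φ) = T(∂_k² φ)`. -/

local notation "∞" => ((⊤ : ℕ∞) : WithTop ℕ∞)

variable {n : ℕ}

lemma pd_contDiff {f : (Fin n → ℝ) → ℂ} (hf : ContDiff ℝ ∞ f) (p : Fin n) :
    ContDiff ℝ ∞ (pd p f) := by
  have h : ContDiff ℝ ∞ (fderiv ℝ f) := hf.fderiv_right (by simp)
  exact (ContinuousLinearMap.apply ℝ ℂ (Pi.single p 1 : Fin n → ℝ)).contDiff.comp h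

lemma lap_contDiff {f : (Fin n → ℝ) → ℂ} (hf : ContDiff ℝ ∞ f) :
    ContDiff ℝ ∞ (lap f) := by
  unfold lap
  exact ContDiff.sum fun j _ => pd_contDiff (pd_contDiff hf j) j

lemma lap_iter_contDiff {f : (Fin n → ℝ) → ℂ} (hf : ContDiff ℝ ∞ f) (m : ℕ) :
    ContDiff ℝ ∞ (lap^[m] f) := by
  induction m with
  | zero => exact hf
  | succ m ih => rw [Function.iterate_succ_apply']; exact lap_contDiff ih

lemma pd_add {f g : (Fin n → ℝ) → ℂ} (hf : Differentiable ℝ f) (hg : Differentiable ℝ g)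
    (p : Fin n) : pd p (fun x => f x + g x) = fun x => pd p f x + pd p g x := by
  funext x
  simp [pd, fderiv_fun_add (hf x) (hg x)]

lemma pd_const_mul {f : (Fin n → ℝ) → ℂ} (hf : Differentiable ℝ f) (c : ℂ) (p : Fin n) :
    pd p (fun x => c * f x) = fun x => c * pd p f x := by
  funext x
  simp [pd, fderiv_const_mul (hf x) c]

lemma pd_sum {ι : Type*} (s : Finset ι) (F : ι → (Fin n → ℝ) → ℂ)
    (hF : ∀ j ∈ s, Differentiable ℝ (F j)) (p : Fin n) :
    pd p (fun x => ∑ j ∈ s, F j x) = fun x => ∑ j ∈ s, pd p (F j) x := by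
  funext x
  simp [pd, fderiv_fun_sum (fun j hj => (hF j hj) x)]

lemma pd_mul {f g : (Fin n → ℝ) → ℂ} (hf : Differentiable ℝ f) (hg : Differentiable ℝ g)
    (p : Fin n) :
    pd p (fun x => f x * g x) = fun x => pd p f x * g x + f x * pd p g x := by
  funext x
  simp [pd, fderiv_fun_mul (hf x) (hg x)]
  ring

lemma pd_pd_eq {f : (Fin n → ℝ) → ℂ} (hf : ContDiff ℝ ∞ f) (i j : Fin n) (x : Fin n → ℝ) :
    pd i (pd j f) x = fderiv ℝ (fderiv ℝ f) x (Pi.single i 1) (Pi.single j 1) := by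
  have hd : DifferentiableAt ℝ (fderiv ℝ f) x :=
    ((hf.fderiv_right (m := ∞) (by simp)).differentiable (by simp)) x
  have : pd j f = fun y => (fderiv ℝ f y) (Pi.single j 1) := rfl
  rw [pd, this, fderiv_clm_apply hd (differentiableAt_const _)]
  simp

lemma pd_comm {f : (Fin n → ℝ) → ℂ} (hf : ContDiff ℝ ∞ f) (i j : Fin n) :
    pd i (pd j f) = pd j (pd i f) := by
  funext x
  rw [pd_pd_eq hf i j x, pd_pd_eq hf j i x]
  refine (hf.contDiffAt.isSymmSndFDerivAt ?_) _ _
  rw [show ((2:WithTop ℕ∞)) = (((2:ℕ∞)):WithTop ℕ∞) by rfl]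
  simp only [minSmoothness_of_isRCLikeNormedField]
  exact WithTop.coe_le_coe.2 (le_top (α := ℕ∞))

lemma diff_of_contDiff {f : (Fin n → ℝ) → ℂ} (hf : ContDiff ℝ ∞ f) : Differentiable ℝ f :=
  hf.differentiable (by simp)

lemma lap_add {f g : (Fin n → ℝ) → ℂ} (hf : ContDiff ℝ ∞ f) (hg : ContDiff ℝ ∞ g) :
    lap (fun x => f x + g x) = fun x => lap f x + lap g x := by
  funext x
  unfold lap
  rw [← Finset.sum_add_distrib]
  refine Finset.sum_congr rfl fun j _ => ?_
  rw [pd_add (diff_of_contDiff hf) (diff_of_contDiff hg),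
    pd_add (diff_of_contDiff (pd_contDiff hf j)) (diff_of_contDiff (pd_contDiff hg j))]

lemma lap_const_mul {f : (Fin n → ℝ) → ℂ} (hf : ContDiff ℝ ∞ f) (c : ℂ) :
    lap (fun x => c * f x) = fun x => c * lap f x := by
  funext x
  unfold lap
  rw [Finset.mul_sum]
  refine Finset.sum_congr rfl fun j _ => ?_
  rw [pd_const_mul (diff_of_contDiff hf), pd_const_mul (diff_of_contDiff (pd_contDiff hf j))]

lemma lap_sum {ι : Type*} (s : Finset ι) (F : ι → (Fin n → ℝ) → ℂ)
    (hF : ∀ j ∈ s, ContDiff ℝ ∞ (F j)) :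
    lap (fun x => ∑ j ∈ s, F j x) = fun x => ∑ j ∈ s, lap (F j) x := by
  classical
  induction s using Finset.induction with
  | empty =>
    funext x
    simp only [Finset.sum_empty]
    have hpd : ∀ p : Fin n, pd p (fun _ : Fin n → ℝ => (0:ℂ)) = fun _ => 0 := fun p => by
      funext y; simp [pd]
    simp [lap, hpd]
  | insert _ _ hj ih =>
    rename_i a s'
    have h1 : ContDiff ℝ ∞ (F a) := hF a (Finset.mem_insert_self a s')
    have h2 : ContDiff ℝ ∞ (fun x => ∑ j ∈ s', F j x) :=
      ContDiff.sum fun j hjm => hF j (Finset.mem_insert_of_mem hjm)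
    have : (fun x => ∑ j ∈ insert a s', F j x) = fun x => F a x + ∑ j ∈ s', F j x := by
      funext x; rw [Finset.sum_insert hj]
    rw [this, lap_add h1 h2, ih (fun j hjm => hF j (Finset.mem_insert_of_mem hjm))]
    funext x
    rw [Finset.sum_insert hj]

lemma pd_lap_comm {f : (Fin n → ℝ) → ℂ} (hf : ContDiff ℝ ∞ f) (k : Fin n) :
    pd k (lap f) = lap (pd k f) := by
  have : lap f = fun x => ∑ j, pd j (pd j f) x := rfl
  rw [this, pd_sum _ _ (fun j _ => diff_of_contDiff (pd_contDiff (pd_contDiff hf j) j))]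
  unfold lap
  funext x
  refine Finset.sum_congr rfl fun j _ => ?_
  rw [pd_comm (pd_contDiff hf j) k j, pd_comm hf k j]

lemma lap_mul {f g : (Fin n → ℝ) → ℂ} (hf : ContDiff ℝ ∞ f) (hg : ContDiff ℝ ∞ g) :
    lap (fun x => f x * g x)
      = fun x => lap f x * g x + 2 * (∑ j, pd j f x * pd j g x) + f x * lap g x := by
  have hstep : ∀ j : Fin n, pd j (pd j fun x => f x * g x)
      = fun x => pd j (pd j f) x * g x + 2 * (pd j f x * pd j g x) + f x * pd j (pd j g) x := by
    intro j
    rw [pd_mul (diff_of_contDiff hf) (diff_of_contDiff hg) j]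
    rw [pd_add (by
        exact (diff_of_contDiff ((pd_contDiff hf j).mul hg)))
      (by exact (diff_of_contDiff (hf.mul (pd_contDiff hg j))))]
    rw [pd_mul (diff_of_contDiff (pd_contDiff hf j)) (diff_of_contDiff hg) j,
      pd_mul (diff_of_contDiff hf) (diff_of_contDiff (pd_contDiff hg j)) j]
    funext x
    ring
  funext x
  show ∑ j, pd j (pd j fun x => f x * g x) x = _
  calc ∑ j, pd j (pd j fun x => f x * g x) x
      = ∑ j, (pd j (pd j f) x * g x + 2 * (pd j f x * pd j g x) + f x * pd j (pd j g) x) := by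
        refine Finset.sum_congr rfl fun j _ => ?_; rw [hstep j]
    _ = _ := by
        simp only [Finset.sum_add_distrib, ← Finset.sum_mul, ← Finset.mul_sum, lap]

noncomputable def coordC {n : ℕ} (k : Fin n) : (Fin n → ℝ) → ℂ := fun x => ((x k : ℝ) : ℂ)

lemma coordC_eq_clm (k : Fin n) :
    coordC k = ⇑(Complex.ofRealCLM.comp (ContinuousLinearMap.proj (R := ℝ)
      (φ := fun _ : Fin n => ℝ) k)) := rfl

lemma coordC_contDiff (k : Fin n) : ContDiff ℝ ∞ (coordC (n := n) k) := by
  rw [coordC_eq_clm]; exact (Complex.ofRealCLM.comp _).contDiff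

lemma pd_coordC (j k : Fin n) :
    pd j (coordC k) = fun _ => if k = j then (1 : ℂ) else 0 := by
  funext x
  rw [pd, coordC_eq_clm, ContinuousLinearMap.fderiv]
  simp [Pi.single_apply]
  split <;> simp

lemma pd_coordC_contDiff (j k : Fin n) : ContDiff ℝ ∞ (pd j (coordC (n := n) k)) := by
  rw [pd_coordC]; exact contDiff_const

lemma lap_coordC (k : Fin n) : lap (coordC (n := n) k) = fun _ => 0 := by
  funext x
  unfold lap
  have : ∀ j : Fin n, pd j (pd j (coordC (n := n) k)) = fun _ => 0 := by
    intro j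
    rw [pd_coordC]
    funext y; simp [pd]
  simp [this]


noncomputable def QF {n : ℕ} (I : Finset (Fin n)) : (Fin n → ℝ) → ℂ :=
  fun x => ∑ k, ((epsSet I k : ℝ) : ℂ) * coordC k x ^ 2

lemma coordC_sq_contDiff (k : Fin n) : ContDiff ℝ ∞ (fun x => coordC (n := n) k x ^ 2) := by
  have := (coordC_contDiff k).mul (coordC_contDiff k)
  simpa only [pow_two] using this

lemma QF_contDiff (I : Finset (Fin n)) : ContDiff ℝ ∞ (QF I) :=
  ContDiff.sum fun k _ => contDiff_const.mul (coordC_sq_contDiff k)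

lemma pd_coordC_sq (j k : Fin n) :
    pd j (fun x => coordC (n := n) k x ^ 2)
      = fun x => (if k = j then (2 : ℂ) else 0) * coordC k x := by
  have h : (fun x => coordC (n := n) k x ^ 2) = fun x => coordC k x * coordC k x := by
    funext x; ring
  rw [h, pd_mul (diff_of_contDiff (coordC_contDiff k)) (diff_of_contDiff (coordC_contDiff k)),
    pd_coordC]
  funext x
  split <;> ring

lemma pd_QF (I : Finset (Fin n)) (j : Fin n) :
    pd j (QF I) = fun x => 2 * ((epsSet I j : ℝ) : ℂ) * coordC j x := by
  unfold QF
  rw [pd_sum _ _ (fun k _ => diff_of_contDiff (contDiff_const.mul (coordC_sq_contDiff k)))]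
  funext x
  have : ∀ k : Fin n, pd j (fun x => ((epsSet I k : ℝ) : ℂ) * coordC k x ^ 2) x
      = ((epsSet I k : ℝ) : ℂ) * ((if k = j then (2:ℂ) else 0) * coordC k x) := by
    intro k
    rw [pd_const_mul (diff_of_contDiff (coordC_sq_contDiff k)), pd_coordC_sq]
  simp only [this]
  rw [Finset.sum_eq_single j]
  · simp; ring
  · intro b _ hb; simp [hb]
  · simp

lemma pd_QF_contDiff (I : Finset (Fin n)) (j : Fin n) : ContDiff ℝ ∞ (pd j (QF I)) := by
  rw [pd_QF]
  exact contDiff_const.mul (coordC_contDiff j)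

lemma lap_QF (I : Finset (Fin n)) :
    lap (QF I) = fun _ => ∑ k, 2 * ((epsSet I k : ℝ) : ℂ) := by
  funext x
  unfold lap
  refine Finset.sum_congr rfl fun j _ => ?_
  rw [pd_QF]
  rw [pd_const_mul (diff_of_contDiff (coordC_contDiff j)) _ j, pd_coordC]
  simp

lemma sum_epsSet (I : Finset (Fin n)) :
    (∑ k, ((epsSet I k : ℝ) : ℂ)) = 2 * (I.card : ℂ) - (n : ℂ) := by
  have h : ∀ k : Fin n, ((epsSet I k : ℝ) : ℂ)
      = 2 * (if k ∈ I then (1:ℂ) else 0) - 1 := by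
    intro k
    unfold epsSet
    split <;> norm_num
  simp only [h]
  rw [Finset.sum_sub_distrib, ← Finset.mul_sum]
  simp [Finset.sum_ite_mem, Finset.univ_inter]

noncomputable def EF {n : ℕ} (I : Finset (Fin n)) (g : (Fin n → ℝ) → ℂ) : (Fin n → ℝ) → ℂ :=
  fun x => ∑ k, ((epsSet I k : ℝ) : ℂ) * (coordC k x * pd k g x)

noncomputable def LF {n : ℕ} (I : Finset (Fin n)) (g : (Fin n → ℝ) → ℂ) : (Fin n → ℝ) → ℂ :=
  fun x => ∑ k, ((epsSet I k : ℝ) : ℂ) * pd k (pd k g) x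

noncomputable def cSum {n : ℕ} (I : Finset (Fin n)) : ℂ := ∑ k, 2 * ((epsSet I k : ℝ) : ℂ)

lemma EF_contDiff (I : Finset (Fin n)) {g : (Fin n → ℝ) → ℂ} (hg : ContDiff ℝ ∞ g) :
    ContDiff ℝ ∞ (EF I g) :=
  ContDiff.sum fun k _ => contDiff_const.mul ((coordC_contDiff k).mul (pd_contDiff hg k))

lemma LF_contDiff (I : Finset (Fin n)) {g : (Fin n → ℝ) → ℂ} (hg : ContDiff ℝ ∞ g) :
    ContDiff ℝ ∞ (LF I g) :=
  ContDiff.sum fun k _ => contDiff_const.mul (pd_contDiff (pd_contDiff hg k) k)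

lemma lapA (I : Finset (Fin n)) {g : (Fin n → ℝ) → ℂ} (hg : ContDiff ℝ ∞ g) :
    lap (fun x => QF I x * g x)
      = fun x => QF I x * lap g x + 4 * EF I g x + cSum I * g x := by
  rw [lap_mul (QF_contDiff I) hg, lap_QF]
  funext x
  have h2 : ∑ j, pd j (QF I) x * pd j g x = 2 * EF I g x := by
    unfold EF
    rw [Finset.mul_sum]
    refine Finset.sum_congr rfl fun j _ => ?_
    simp only [pd_QF]
    ring
  rw [h2]
  unfold cSum
  rw [Finset.sum_mul]
  ring

lemma lap_coordC_mul {h : (Fin n → ℝ) → ℂ} (hh : ContDiff ℝ ∞ h) (k : Fin n) :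
    lap (fun x => coordC k x * h x)
      = fun x => 2 * pd k h x + coordC k x * lap h x := by
  rw [lap_mul (coordC_contDiff k) hh, lap_coordC]
  funext x
  have h2 : ∑ j, pd j (coordC (n := n) k) x * pd j h x = pd k h x := by
    have : ∀ j : Fin n, pd j (coordC (n := n) k) x * pd j h x
        = (if k = j then (1:ℂ) else 0) * pd j h x := by
      intro j; simp only [pd_coordC]
    simp only [this]
    rw [Finset.sum_eq_single k]
    · simp
    · intro b _ hb; simp [Ne.symm hb]
    · simp
  rw [h2]
  ring

lemma lapB (I : Finset (Fin n)) {g : (Fin n → ℝ) → ℂ} (hg : ContDiff ℝ ∞ g) :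
    lap (EF I g) = fun x => EF I (lap g) x + 2 * LF I g x := by
  unfold EF
  rw [lap_sum _ _ (fun k _ =>
    contDiff_const.mul ((coordC_contDiff k).mul (pd_contDiff hg k)))]
  funext x
  have hterm : ∀ k : Fin n,
      lap (fun x => ((epsSet I k : ℝ) : ℂ) * (coordC k x * pd k g x)) x
        = ((epsSet I k : ℝ) : ℂ) * (2 * pd k (pd k g) x + coordC k x * pd k (lap g) x) := by
    intro k
    rw [lap_const_mul ((coordC_contDiff k).mul (pd_contDiff hg k)),
      lap_coordC_mul (pd_contDiff hg k) k, pd_lap_comm hg k]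
  simp only [hterm]
  unfold LF
  rw [Finset.mul_sum, ← Finset.sum_add_distrib]
  refine Finset.sum_congr rfl fun k _ => ?_
  ring

lemma lapC (I : Finset (Fin n)) {g : (Fin n → ℝ) → ℂ} (hg : ContDiff ℝ ∞ g) :
    lap (LF I g) = LF I (lap g) := by
  unfold LF
  rw [lap_sum _ _ (fun k _ => contDiff_const.mul (pd_contDiff (pd_contDiff hg k) k))]
  funext x
  refine Finset.sum_congr rfl fun k _ => ?_
  rw [lap_const_mul (pd_contDiff (pd_contDiff hg k) k),
    pd_lap_comm hg k, pd_lap_comm (pd_contDiff hg k) k]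

lemma main_ind (I : Finset (Fin n)) {g : (Fin n → ℝ) → ℂ} (hg : ContDiff ℝ ∞ g) :
    ∀ m : ℕ, 1 ≤ m →
      lap^[m] (fun x => QF I x * g x)
        = fun x => QF I x * lap^[m] g x
            + 4 * (m : ℂ) * EF I (lap^[m - 1] g) x
            + (m : ℂ) * cSum I * lap^[m - 1] g x
            + 4 * (m : ℂ) * ((m : ℂ) - 1) * LF I (lap^[m - 2] g) x := by
  intro m hm
  induction m, hm using Nat.le_induction with
  | base =>
    rw [Function.iterate_one, lapA I hg]
    funext x
    simp only [show (1:ℕ) - 1 = 0 from rfl, show (1:ℕ) - 2 = 0 from rfl,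
      Function.iterate_one, Function.iterate_zero, id_eq, Nat.cast_one]
    ring
  | succ m hm IH =>
    have hA : ContDiff ℝ ∞ (fun x => QF I x * lap^[m] g x) :=
      (QF_contDiff I).mul (lap_iter_contDiff hg m)
    have hEm1 : ContDiff ℝ ∞ (EF I (lap^[m-1] g)) :=
      EF_contDiff I (lap_iter_contDiff hg (m-1))
    have hB : ContDiff ℝ ∞ (fun x => 4 * (m : ℂ) * EF I (lap^[m-1] g) x) :=
      contDiff_const.mul hEm1
    have hC : ContDiff ℝ ∞ (fun x => (m : ℂ) * cSum I * lap^[m-1] g x) :=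
      contDiff_const.mul (lap_iter_contDiff hg (m-1))
    have hLm2 : ContDiff ℝ ∞ (LF I (lap^[m-2] g)) :=
      LF_contDiff I (lap_iter_contDiff hg (m-2))
    have hD : ContDiff ℝ ∞ (fun x => 4 * (m : ℂ) * ((m : ℂ) - 1) * LF I (lap^[m-2] g) x) :=
      contDiff_const.mul hLm2
    have hiter : lap (lap^[m-1] g) = lap^[m] g := by
      conv_rhs => rw [show m = m - 1 + 1 from by omega, Function.iterate_succ_apply']
    rw [Function.iterate_succ_apply', IH]
    rw [lap_add ((hA.add hB).add hC) hD, lap_add (hA.add hB) hC, lap_add hA hB]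
    rw [lapA I (lap_iter_contDiff hg m)]
    rw [lap_const_mul hEm1, lapB I (lap_iter_contDiff hg (m-1)), hiter]
    rw [lap_const_mul (lap_iter_contDiff hg (m-1)), hiter]
    rw [lap_const_mul hLm2, lapC I (lap_iter_contDiff hg (m-2))]
    have hLkey : ∀ x, 4 * (m : ℂ) * ((m : ℂ) - 1) * LF I (lap (lap^[m-2] g)) x
        = 4 * (m : ℂ) * ((m : ℂ) - 1) * LF I (lap^[m-1] g) x := by
      intro x
      rcases eq_or_lt_of_le hm with h1 | h2
      · subst h1
        norm_num
      · have : lap (lap^[m-2] g) = lap^[m-1] g := by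
          conv_rhs => rw [show m - 1 = m - 2 + 1 from by omega, Function.iterate_succ_apply']
        rw [this]
    funext x
    have hm1 : m + 1 - 1 = m := by omega
    have hm2 : m + 1 - 2 = m - 1 := by omega
    rw [hm1, hm2]
    simp only [hLkey]
    rw [← Function.iterate_succ_apply' lap m g]
    push_cast
    ring


lemma pd_pd_lap_iter {f : (Fin n → ℝ) → ℂ} (hf : ContDiff ℝ ∞ f) (k : Fin n) (m : ℕ) :
    pd k (pd k (lap^[m] f)) = lap^[m] (pd k (pd k f)) := by
  induction m with
  | zero => rfl
  | succ m ih =>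
    rw [Function.iterate_succ_apply', Function.iterate_succ_apply',
      pd_lap_comm (lap_iter_contDiff hf m) k,
      pd_lap_comm (pd_contDiff (lap_iter_contDiff hf m) k) k, ih]

lemma QF_zero (I : Finset (Fin n)) : QF I 0 = 0 := by
  simp [QF, coordC]

lemma EF_zero (I : Finset (Fin n)) (h : (Fin n → ℝ) → ℂ) : EF I h 0 = 0 := by
  simp [EF, coordC]

theorem stmt6 (n : ℕ) (hn : 1 ≤ n) (l : ℕ) (hl : 1 ≤ l) (i : ℕ)
    (I : Finset (Fin n)) (hI : I.card = i)
    (φ : SchwartzMap (Fin n → ℝ) ℂ) :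
    lap^[l + 1] (fun y => ((∑ k, epsSet I k * (y k) ^ 2 : ℝ) : ℂ) * φ y) 0
      = 4 * ((l : ℂ) + 1) * (l : ℂ) *
          (∑ k, ((epsSet I k : ℝ) : ℂ) * lap^[l - 1] (pd k (pd k ⇑φ)) 0)
        + 2 * ((l : ℂ) + 1) * (2 * (i : ℂ) - (n : ℂ)) * lap^[l] ⇑φ 0 := by
  have hφ : ContDiff ℝ ∞ ⇑φ := φ.smooth ⊤
  have hfun : (fun y => ((∑ k, epsSet I k * (y k) ^ 2 : ℝ) : ℂ) * φ y)
      = fun y => QF I y * φ y := by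
    funext y
    congr 1
    unfold QF coordC
    push_cast
    rfl
  rw [hfun, main_ind I hφ (l + 1) (by omega)]
  have e1 : l + 1 - 1 = l := by omega
  have e2 : l + 1 - 2 = l - 1 := by omega
  rw [e1, e2]
  simp only [QF_zero, EF_zero, zero_mul, mul_zero, add_zero, zero_add]
  have hc : cSum I = 2 * (2 * (i : ℂ) - (n : ℂ)) := by
    unfold cSum
    rw [← Finset.mul_sum, sum_epsSet, hI]
  have hL : LF I (lap^[l - 1] ⇑φ) 0
      = ∑ k, ((epsSet I k : ℝ) : ℂ) * lap^[l - 1] (pd k (pd k ⇑φ)) 0 := by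
    unfold LF
    refine Finset.sum_congr rfl fun k _ => ?_
    rw [pd_pd_lap_iter hφ k (l - 1)]
  rw [hc, hL]
  push_cast
  ring
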